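/- arXiv:2405.21014 — 7 statements merged into one kernel-verified Lean document; each statement's English description precedes it below -/
import Mathlib

section
/- Let K be a field and let O₁, O₂ be valuation subrings of K (possibly equal to K itself) which are both henselian as local rings. If the residue field of O₁ is finite and the residue field of O₂ is finite, then the two residue fields have the same characteristic. -/
open IsLocalRing Polynomial

set_option maxHeartbeats 2000000

/-- A root of unity lies in every valuation subring. -/
lemma ValuationSubring.mem_of_pow_eq_one' {K : Type*} [Field K]
    (A : ValuationSubring K) {x : K} {n : ℕ} (hn : n ≠ 0) (hx : x ^ n = 1) : x ∈ A := by
  rcases A.mem_or_inv_mem x with h | h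
  · exact h
  · have hx0 : x ≠ 0 := by
      rintro rfl
      rw [zero_pow hn] at hx
      exact zero_ne_one hx
    have h1 : x * x ^ (n - 1) = 1 := by
      rw [← pow_succ', Nat.sub_add_cancel (Nat.one_le_iff_ne_zero.mpr hn)]
      exact hx
    have h2 : x = (x⁻¹) ^ (n - 1) := by
      rw [inv_pow]
      exact eq_inv_of_mul_eq_one_right (by rw [mul_comm]; exact h1)
    exact h2 ▸ pow_mem h (n - 1)

/-- If a field `K` carries two henselian valuation subrings, each with finite
residue field, then the two residue fields have the same characteristic. -/
theorem two_henselian_finite_residue_same_char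
    (K : Type*) [Field K] (O₁ O₂ : ValuationSubring K)
    [HenselianLocalRing O₁] [HenselianLocalRing O₂]
    (h₁ : Finite (IsLocalRing.ResidueField O₁))
    (h₂ : Finite (IsLocalRing.ResidueField O₂)) :
    ringChar (IsLocalRing.ResidueField O₁) = ringChar (IsLocalRing.ResidueField O₂) := by
  classical
  by_contra hne
  haveI : Fintype (ResidueField O₁) := Fintype.ofFinite _
  haveI : Fintype (ResidueField O₂) := Fintype.ofFinite _
  set p₁ := ringChar (ResidueField O₁) with hp₁def
  set p₂ := ringChar (ResidueField O₂) with hp₂def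
  haveI hc₁ : CharP (ResidueField O₁) p₁ := ringChar.charP _
  haveI hc₂ : CharP (ResidueField O₂) p₂ := ringChar.charP _
  have hp₁ : p₁.Prime := CharP.char_is_prime (ResidueField O₁) p₁
  have hp₂ : p₂.Prime := CharP.char_is_prime (ResidueField O₂) p₂
  have hp₁0 : p₁ ≠ 0 := hp₁.ne_zero
  have hm0 : p₁ - 1 ≠ 0 := by have := hp₁.two_le; omega
  -- `p₁` is nonzero in the second residue field
  have hp₁κ₂ : (p₁ : ResidueField O₂) ≠ 0 := by
    rw [Ne, CharP.cast_eq_zero_iff (ResidueField O₂) p₂]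
    exact fun hdvd => hne ((Nat.prime_dvd_prime_iff_eq hp₂ hp₁).mp hdvd).symm
  -- the Artin-Schreier-type map on the second residue field is not surjective
  have hφ : ¬ Function.Surjective (fun y : ResidueField O₂ => y ^ p₁ - y) := by
    intro hs
    have hinj : Function.Injective (fun y : ResidueField O₂ => y ^ p₁ - y) :=
      Finite.injective_iff_surjective.mpr hs
    have h01 : (0 : ResidueField O₂) = 1 := hinj (by simp [zero_pow hp₁0])
    exact zero_ne_one h01
  simp only [Function.Surjective, not_forall, not_exists] at hφ
  obtain ⟨cb, hcb⟩ := hφ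
  have hcb0 : cb ≠ 0 := fun h => hcb 0 (by simp [zero_pow hp₁0, h])
  -- a generator of the multiplicative group of the second residue field
  obtain ⟨g, hg⟩ := IsCyclic.exists_monoid_generator (α := (ResidueField O₂)ˣ)
  set M := Fintype.card (ResidueField O₂)ˣ with hMdef
  have hM0 : M ≠ 0 := Fintype.card_ne_zero
  have hMκ : (M : ResidueField O₂) ≠ 0 := by
    have hcard : M = Fintype.card (ResidueField O₂) - 1 := by
      rw [hMdef, Fintype.card_units]
    have h1le : 1 ≤ Fintype.card (ResidueField O₂) := Fintype.card_pos
    rw [hcard, Nat.cast_sub h1le, FiniteField.cast_card_eq_zero, Nat.cast_one, zero_sub]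
    exact neg_ne_zero.mpr one_ne_zero
  have hgM : (↑g : ResidueField O₂) ^ M = 1 := by
    rw [← Units.val_pow_eq_pow_val, pow_card_eq_one, Units.val_one]
  obtain ⟨g₀, hg₀⟩ := IsLocalRing.residue_surjective (R := O₂) (↑g : ResidueField O₂)
  -- lift the generator to a root of unity `ζ₀ ∈ O₂` by Hensel's lemma
  obtain ⟨ζ₀, hζroot, hζnear⟩ := HenselianLocalRing.is_henselian (R := O₂)
    (X ^ M - C 1) (monic_X_pow_sub_C 1 hM0) g₀
    (by
      rw [← residue_eq_zero_iff]
      have hev : ((X : O₂[X]) ^ M - C 1).eval g₀ = g₀ ^ M - 1 := by simp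
      rw [hev, map_sub, map_pow, map_one, hg₀, hgM, sub_self])
    (by
      have hev : (derivative ((X : O₂[X]) ^ M - C 1)).eval g₀ = (M : O₂) * g₀ ^ (M - 1) := by
        simp [derivative_X_pow]
      rw [hev]
      have hres : residue O₂ ((M : O₂) * g₀ ^ (M - 1)) ≠ 0 := by
        rw [map_mul, map_pow, map_natCast, hg₀]
        exact mul_ne_zero hMκ (pow_ne_zero _ (Units.ne_zero g))
      exact IsLocalRing.notMem_maximalIdeal.mp
        (fun hmem => hres ((residue_eq_zero_iff _).mpr hmem)))
  have hζM : ζ₀ ^ M = 1 := by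
    have h := hζroot
    simp only [IsRoot, eval_sub, eval_pow, eval_X, eval_C] at h
    exact sub_eq_zero.mp h
  have hζres : residue O₂ ζ₀ = ↑g := by
    have h0 : residue O₂ (ζ₀ - g₀) = 0 := (residue_eq_zero_iff _).mpr hζnear
    rw [map_sub, sub_eq_zero] at h0
    rw [h0, hg₀]
  have hζMK : (ζ₀ : K) ^ M = 1 := by exact_mod_cast congrArg (fun t : O₂ => (t : K)) hζM
  have hζO₁ : (ζ₀ : K) ∈ O₁ := O₁.mem_of_pow_eq_one' hM0 hζMK
  -- choose the power of the generator matching the missed value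
  have hcbp : cb * (p₁ : ResidueField O₂)⁻¹ ≠ 0 := mul_ne_zero hcb0 (inv_ne_zero hp₁κ₂)
  obtain ⟨k, hk⟩ := hg (Units.mk0 _ hcbp)
  have hk' : g ^ k = Units.mk0 _ hcbp := hk
  have hgk : (↑g : ResidueField O₂) ^ k = cb * (p₁ : ResidueField O₂)⁻¹ := by
    rw [← Units.val_pow_eq_pow_val, hk', Units.val_mk0]
  -- the element `c`
  have hcO₁ : (p₁ : K) * (ζ₀ : K) ^ k ∈ O₁ := mul_mem (natCast_mem O₁ p₁) (pow_mem hζO₁ k)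
  have hcO₂ : (p₁ : K) * (ζ₀ : K) ^ k ∈ O₂ := mul_mem (natCast_mem O₂ p₁) (pow_mem ζ₀.2 k)
  have hc₂eq : (⟨(p₁ : K) * (ζ₀ : K) ^ k, hcO₂⟩ : O₂) = (p₁ : O₂) * ζ₀ ^ k := by
    apply Subtype.ext
    show (p₁ : K) * (ζ₀ : K) ^ k = ((((p₁ : O₂) * ζ₀ ^ k : O₂)) : K)
    push_cast
    ring
  have hrc₂ : residue O₂ (⟨(p₁ : K) * (ζ₀ : K) ^ k, hcO₂⟩ : O₂) = cb := by
    rw [hc₂eq, map_mul, map_pow, map_natCast, hζres, hgk, mul_comm cb, ← mul_assoc,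
      mul_inv_cancel₀ hp₁κ₂, one_mul]
  have hc₁eq : (⟨(p₁ : K) * (ζ₀ : K) ^ k, hcO₁⟩ : O₁) = (p₁ : O₁) * (⟨(ζ₀ : K), hζO₁⟩ : O₁) ^ k := by
    apply Subtype.ext
    show (p₁ : K) * (ζ₀ : K) ^ k = ((((p₁ : O₁) * (⟨(ζ₀ : K), hζO₁⟩ : O₁) ^ k : O₁)) : K)
    push_cast
    ring
  have hc₁mem : (⟨(p₁ : K) * (ζ₀ : K) ^ k, hcO₁⟩ : O₁) ∈ maximalIdeal O₁ := by
    rw [← residue_eq_zero_iff, hc₁eq, map_mul, map_natCast, CharP.cast_eq_zero (ResidueField O₁) p₁, zero_mul]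
  -- Hensel's lemma in O₁ for the Artin-Schreier polynomial
  obtain ⟨a, haroot, -⟩ := HenselianLocalRing.is_henselian (R := O₁)
    (X ^ p₁ - (X + C (⟨(p₁ : K) * (ζ₀ : K) ^ k, hcO₁⟩ : O₁)))
    (monic_X_pow_sub (by rw [degree_X_add_C]; exact_mod_cast hp₁.one_lt))
    0
    (by
      have hev : ((X : O₁[X]) ^ p₁ - (X + C (⟨(p₁ : K) * (ζ₀ : K) ^ k, hcO₁⟩ : O₁))).eval 0
          = -(⟨(p₁ : K) * (ζ₀ : K) ^ k, hcO₁⟩ : O₁) := by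
        simp [zero_pow hp₁0]
      rw [hev]
      exact neg_mem hc₁mem)
    (by
      have hev : (derivative ((X : O₁[X]) ^ p₁ - (X + C (⟨(p₁ : K) * (ζ₀ : K) ^ k, hcO₁⟩ : O₁)))).eval 0
          = -1 := by
        simp [derivative_X_pow, zero_pow hm0]
      rw [hev]
      exact IsUnit.neg isUnit_one)
  have hx0K : (a : K) ^ p₁ - (a : K) = (p₁ : K) * (ζ₀ : K) ^ k := by
    have h := haroot
    simp only [IsRoot, eval_sub, eval_add, eval_pow, eval_X, eval_C] at h
    have h' : a ^ p₁ = a + ⟨(p₁ : K) * (ζ₀ : K) ^ k, hcO₁⟩ := by rwa [sub_eq_zero] at h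
    have h'' := congrArg (fun t : O₁ => (t : K)) h'
    push_cast at h''
    rw [h'']
    ring
  -- `x` belongs to `O₂`
  have hxO₂ : (a : K) ∈ O₂ := by
    rcases O₂.mem_or_inv_mem (a : K) with h | h
    · exact h
    by_contra hxn
    have hxne : (a : K) ≠ 0 := fun h0 => hxn (h0 ▸ zero_mem O₂.toSubring)
    have hnu : ¬IsUnit (⟨(a : K)⁻¹, h⟩ : O₂) := by
      intro hu
      obtain ⟨v, hv⟩ := hu.exists_right_inv
      apply hxn
      have hv' : (a : K)⁻¹ * (v : K) = 1 := by
        have h3 := congrArg (fun t : O₂ => (t : K)) hv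
        simpa using h3
      have h2 : ((a : K)⁻¹)⁻¹ = (v : K) := inv_eq_of_mul_eq_one_right hv'
      rw [inv_inv] at h2
      exact h2 ▸ v.2
    have hr0 : residue O₂ (⟨(a : K)⁻¹, h⟩ : O₂) = 0 :=
      (residue_eq_zero_iff _).mpr ((IsLocalRing.mem_maximalIdeal _).mpr hnu)
    have hkey : (⟨(p₁ : K) * (ζ₀ : K) ^ k, hcO₂⟩ : O₂) * (⟨(a : K)⁻¹, h⟩ : O₂) ^ p₁ + (⟨(a : K)⁻¹, h⟩ : O₂) ^ (p₁ - 1)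
        = 1 := by
      apply Subtype.ext
      push_cast
      rw [← hx0K]
      obtain ⟨m, hm⟩ : ∃ m, p₁ = m + 1 := ⟨p₁ - 1, by omega⟩
      rw [hm, Nat.add_sub_cancel]
      simp only [inv_pow]
      field_simp
      ring
    have hcontr := congrArg (residue O₂) hkey
    rw [map_add, map_mul, map_pow, map_pow, hr0, map_one, zero_pow hp₁0, zero_pow hm0,
      mul_zero, add_zero] at hcontr
    exact zero_ne_one hcontr
  -- conclude: the residue of `x` maps to the missed value `cb`
  have hXeq : (⟨(a : K), hxO₂⟩ : O₂) ^ p₁ - (⟨(a : K), hxO₂⟩ : O₂) = ⟨(p₁ : K) * (ζ₀ : K) ^ k, hcO₂⟩ := by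
    apply Subtype.ext
    push_cast
    exact hx0K
  exact hcb (residue O₂ (⟨(a : K), hxO₂⟩ : O₂))
    (by rw [← map_pow, ← map_sub, hXeq, hrc₂])
end

section
/- Let K be an infinite field. Then at most one of the following three conditions holds: (i) there is a henselian valuation ring on K whose residue field is algebraically closed; (ii) there is a henselian valuation ring on K whose residue field is finite; (iii) there is a henselian valuation ring on K whose residue field is real closed. -/
open Polynomial IsLocalRing

lemma aux_cast_prime_ne_zero (k : Type*) [Field k] (ℓ : ℕ) (hp : ℓ.Prime)
    (h1 : ringChar k ≠ ℓ) : (ℓ : k) ≠ 0 := by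
  intro h
  haveI := ringChar.charP k
  rw [CharP.cast_eq_zero_iff k (ringChar k) ℓ] at h
  rcases (Nat.Prime.eq_one_or_self_of_dvd hp _ h) with h' | h'
  · have : (1 : k) = 0 := by
      have h0 := (CharP.cast_eq_zero_iff k (ringChar k) 1).mpr (h' ▸ dvd_refl _)
      rwa [Nat.cast_one] at h0
    exact one_ne_zero this
  · exact h1 h'


-- lift roots of unity through henselian local rings
lemma aux_hensel_rou {R : Type*} [CommRing R] [HenselianLocalRing R] (n : ℕ) (hn : n ≠ 0)
    (x : ResidueField R) (hx : x ^ n = 1) (hchar : (n : ResidueField R) ≠ 0) :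
    ∃ a : R, a ^ n = 1 ∧ residue R a = x := by
  obtain ⟨a₀, ha₀⟩ := residue_surjective (R := R) x
  have mon : (X ^ n - C (1 : R)).Monic := monic_X_pow_sub_C 1 hn
  have heval : ∀ t : R, (X ^ n - C (1 : R)).eval t = t ^ n - 1 := by intro t; simp
  have hx0 : x ≠ 0 := by
    intro h; rw [h, zero_pow hn] at hx; exact zero_ne_one hx
  obtain ⟨a, ha, ham⟩ := HenselianLocalRing.is_henselian (X ^ n - C (1 : R)) mon a₀
    (by
      rw [heval, ← residue_eq_zero_iff, map_sub, map_pow, map_one, ha₀, hx, sub_self])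
    (by
      refine notMem_maximalIdeal.mp fun hmem => ?_
      have hcon := (residue_eq_zero_iff _).mpr hmem
      have : (X ^ n - C (1 : R)).derivative = C (n : R) * X ^ (n - 1) := by
        simp [Polynomial.derivative_X_pow]
      rw [this] at hcon
      simp only [eval_mul, eval_pow, eval_C, eval_natCast, eval_X, map_mul, map_pow, map_natCast, ha₀] at hcon
      rcases mul_eq_zero.mp hcon with h | h
      · exact hchar h
      · exact pow_ne_zero _ hx0 h)
  refine ⟨a, ?_, ?_⟩
  · rw [Polynomial.IsRoot, heval, sub_eq_zero] at ha; exact ha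
  · have : residue R (a - a₀) = 0 := (residue_eq_zero_iff _).mpr ham
    rw [map_sub, sub_eq_zero] at this
    rw [this, ha₀]

-- In an algebraically closed residue field with (ℓ : k) ≠ 0, lift ℓ distinct ℓ-th roots of unity
lemma aux_many_roots {K : Type*} [Field K] (O : ValuationSubring K) [HenselianLocalRing O]
    (hk : IsAlgClosed (ResidueField O)) (ℓ : ℕ) (hℓ : ℓ ≠ 0)
    (hch : ((ℓ : ResidueField O)) ≠ 0) :
    ∃ S : Finset K, S.card = ℓ ∧ ∀ x ∈ S, x ^ ℓ = 1 := by
  classical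
  set k := ResidueField O
  have hsep : (X ^ ℓ - C (1 : k)).Separable := separable_X_pow_sub_C 1 hch one_ne_zero
  have hsplit : (X ^ ℓ - C (1 : k)).Splits := IsAlgClosed.splits _
  have hne : (X ^ ℓ - C (1 : k)) ≠ 0 := X_pow_sub_C_ne_zero (Nat.pos_of_ne_zero hℓ) 1
  have hcard : (X ^ ℓ - C (1 : k)).roots.card = ℓ := by
    rw [splits_iff_card_roots.mp hsplit, natDegree_X_pow_sub_C]
  set T : Finset k := (X ^ ℓ - C (1 : k)).roots.toFinset with hT
  have hTcard : T.card = ℓ := by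
    rw [hT, Multiset.toFinset_card_of_nodup (nodup_roots hsep), hcard]
  have hTroot : ∀ x ∈ T, x ^ ℓ = 1 := by
    intro x hx
    rw [hT, Multiset.mem_toFinset, mem_roots hne] at hx
    have := hx
    rw [Polynomial.IsRoot] at this
    simp only [eval_sub, eval_pow, eval_X, eval_C, sub_eq_zero] at this
    exact this
  have H : ∀ x : k, ∃ a : O, x ∈ T → (a ^ ℓ = 1 ∧ residue O a = x) := by
    intro x
    by_cases hx : x ∈ T
    · obtain ⟨a, ha1, ha2⟩ := aux_hensel_rou ℓ hℓ x (hTroot x hx) hch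
      exact ⟨a, fun _ => ⟨ha1, ha2⟩⟩
    · exact ⟨0, fun h => absurd h hx⟩
  choose F hF using H
  refine ⟨T.image (fun x => ((F x : O) : K)), ?_, ?_⟩
  · rw [Finset.card_image_of_injOn, hTcard]
    intro x hx y hy hxy
    have hinj : F x = F y := Subtype.coe_injective hxy
    rw [← (hF x hx).2, ← (hF y hy).2, hinj]
  · intro x hx
    obtain ⟨t, ht, rfl⟩ := Finset.mem_image.mp hx
    have := (hF t ht).1
    calc ((F t : O) : K) ^ ℓ = (((F t ^ ℓ : O)) : K) := by push_cast; ring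
    _ = 1 := by rw [this]; simp

-- roots of unity of order ℓ (with (ℓ : k) ≠ 0) inject into the residue field
lemma aux_finite_bound {K : Type*} [Field K] (O : ValuationSubring K)
    [Finite (ResidueField O)] (ℓ : ℕ) (hℓ : ((ℓ : ResidueField O)) ≠ 0)
    (S : Finset K) (hS : ∀ x ∈ S, x ^ ℓ = 1) : S.card ≤ Nat.card (ResidueField O) := by
  classical
  have hℓ0 : ℓ ≠ 0 := by rintro rfl; simp at hℓ
  have key : ∀ z : K, z ^ ℓ = 1 → z * z ^ (ℓ - 1) = 1 := by
    intro z hz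
    rw [← pow_succ', Nat.sub_add_cancel (Nat.one_le_iff_ne_zero.mpr hℓ0)]
    exact hz
  have key' : ∀ z : K, z ^ ℓ = 1 → z ^ (ℓ - 1) = z⁻¹ := fun z hz =>
    eq_inv_of_mul_eq_one_right (mul_comm z (z ^ (ℓ - 1)) ▸ key z hz)
  have hmem : ∀ x : K, x ^ ℓ = 1 → x ∈ O := by
    intro x hx
    rcases O.mem_or_inv_mem x with h | h
    · exact h
    · have hx' : (x⁻¹) ^ ℓ = 1 := by rw [inv_pow, hx, inv_one]
      have : (x⁻¹) ^ (ℓ - 1) = x := by rw [key' _ hx', inv_inv]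
      exact this ▸ pow_mem h (ℓ - 1)
  set ρ : K → ResidueField O := fun x => if h : x ∈ O then residue O ⟨x, h⟩ else 0 with hρ
  have hinj : Set.InjOn ρ S := by
    intro x hxS y hyS hxy
    by_contra hne
    have hx := hS x hxS; have hy := hS y hyS
    have hxO := hmem x hx; have hyO := hmem y hy
    have hy0 : y ≠ 0 := by
      intro h0; rw [h0, zero_pow hℓ0] at hy; exact zero_ne_one hy
    rw [hρ] at hxy; simp only [dif_pos hxO, dif_pos hyO] at hxy
    have hyinv : y ^ (ℓ - 1) = y⁻¹ := key' y hy
    have huK : x / y ∈ O := by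
      have : x / y = x * y ^ (ℓ - 1) := by rw [hyinv]; ring
      rw [this]; exact mul_mem hxO (pow_mem hyO _)
    set u : O := ⟨x / y, huK⟩ with hu
    have hu1 : u ≠ 1 := by
      intro h
      apply hne
      have : x / y = 1 := congrArg Subtype.val h
      rwa [div_eq_one_iff_eq hy0] at this
    have hupow : u ^ ℓ = 1 := by
      apply Subtype.coe_injective
      push_cast
      rw [div_pow, hx, hy, div_one]
    have hures : residue O u = 1 := by
      have hdecomp : u = ⟨y, hyO⟩ * ⟨y ^ (ℓ - 1), pow_mem hyO _⟩
          + (⟨x, hxO⟩ - ⟨y, hyO⟩) * ⟨y ^ (ℓ - 1), pow_mem hyO _⟩ := by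
        apply Subtype.coe_injective
        push_cast
        rw [hyinv]; field_simp
        show x / y * y = y + (x - y); rw [div_mul_cancel₀ x hy0]; ring
      have hprod : (⟨y, hyO⟩ * ⟨y ^ (ℓ - 1), pow_mem hyO _⟩ : O) = 1 := by
        apply Subtype.coe_injective; push_cast; exact key y hy
      have hprodmap : residue O (⟨y, hyO⟩ * ⟨y ^ (ℓ - 1), pow_mem hyO _⟩ : O) = 1 := by
        rw [hprod, map_one]
      rw [hdecomp, map_add, hprodmap, map_mul, map_sub, hxy, sub_self, zero_mul, add_zero]
    have hgeom : (∑ i ∈ Finset.range ℓ, u ^ i) * (u - 1) = 0 := by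
      rw [geom_sum_mul, hupow, sub_self]
    have hsum0 : (∑ i ∈ Finset.range ℓ, u ^ i) = 0 := by
      rcases mul_eq_zero.mp hgeom with h | h
      · exact h
      · exact absurd (by rwa [sub_eq_zero] at h) hu1
    apply hℓ
    have := congrArg (residue O) hsum0
    rw [map_sum, map_zero] at this
    simp only [map_pow, hures, one_pow] at this
    rwa [Finset.sum_const, Finset.card_range, nsmul_eq_mul, mul_one] at this
  haveI : Fintype (ResidueField O) := Fintype.ofFinite _
  have := Finset.card_le_card_of_injOn ρ (fun x _ => Finset.mem_univ (ρ x)) hinj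
  rwa [Finset.card_univ, ← Nat.card_eq_fintype_card] at this

-- among finitely many elements, one "divides" all others in O
lemma aux_dominant {K : Type*} [Field K] (O : ValuationSubring K) {ι : Type*}
    (T : Finset ι) (f : ι → K) (hT : T.Nonempty) (hne : ∀ i ∈ T, f i ≠ 0) :
    ∃ j ∈ T, ∀ i ∈ T, f i / f j ∈ O := by
  classical
  induction T using Finset.cons_induction with
  | empty => exact absurd hT (by simp)
  | cons a s ha ih =>
    by_cases hs : s.Nonempty
    · obtain ⟨j, hj, hdom⟩ := ih hs (fun i hi => hne i (Finset.mem_cons_of_mem hi))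
      have hfj : f j ≠ 0 := hne j (Finset.mem_cons_of_mem hj)
      have hfa : f a ≠ 0 := hne a (Finset.mem_cons_self a s)
      rcases O.mem_or_inv_mem (f a / f j) with h | h
      · refine ⟨j, Finset.mem_cons_of_mem hj, fun i hi => ?_⟩
        rcases Finset.mem_cons.mp hi with rfl | hi'
        · exact h
        · exact hdom i hi'
      · rw [inv_div] at h
        refine ⟨a, Finset.mem_cons_self a s, fun i hi => ?_⟩
        rcases Finset.mem_cons.mp hi with rfl | hi'
        · rw [div_self hfa]; exact one_mem O
        · have : f i / f a = (f i / f j) * (f j / f a) := by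
            field_simp
          rw [this]
          exact mul_mem (hdom i hi') h
    · rw [Finset.not_nonempty_iff_eq_empty] at hs
      subst hs
      refine ⟨a, Finset.mem_cons_self a _, fun i hi => ?_⟩
      rcases Finset.mem_cons.mp hi with rfl | hi'
      · rw [div_self (hne i (Finset.mem_cons_self i _))]; exact one_mem O
      · simp at hi'

-- transfer anisotropy from the residue field up to K
lemma aux_transfer {K : Type*} [Field K] (O : ValuationSubring K)
    (hO : ∀ (n : ℕ) (a : Fin n → ResidueField O), (∑ i, a i ^ 2) = 0 → ∀ i, a i = 0)
    (n : ℕ) (f : Fin n → K) (hsum : (∑ i, f i ^ 2) = 0) : ∀ i, f i = 0 := by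
  classical
  by_contra hcon
  push_neg at hcon
  obtain ⟨j0, hj0⟩ := hcon
  set T : Finset (Fin n) := Finset.univ.filter (fun i => f i ≠ 0) with hTdef
  have hj0T : j0 ∈ T := by simp [hTdef, hj0]
  obtain ⟨j, hjT, hdom⟩ := aux_dominant O T f ⟨j0, hj0T⟩ (fun i hi => (Finset.mem_filter.mp hi).2)
  have hfj : f j ≠ 0 := (Finset.mem_filter.mp hjT).2
  have hmem : ∀ i, f i / f j ∈ O := by
    intro i
    by_cases hi : i ∈ T
    · exact hdom i hi
    · have : f i = 0 := by
        by_contra h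
        exact hi (by simp [hTdef, h])
      rw [this, zero_div]; exact zero_mem O
  set g : Fin n → O := fun i => ⟨f i / f j, hmem i⟩ with hg
  have hcoe : ((∑ i, g i ^ 2 : O) : K) = ∑ i, (f i / f j) ^ 2 := by
    rw [show ((∑ i, g i ^ 2 : O) : K) = O.subtype (∑ i, g i ^ 2) from rfl, map_sum]
    simp only [map_pow]
    rfl
  have hzero : ((∑ i, g i ^ 2 : O) : K) = 0 := by
    rw [hcoe]
    simp only [div_pow]
    rw [← Finset.sum_div, hsum, zero_div]
  have hgsum : (∑ i, g i ^ 2) = 0 := Subtype.coe_injective (by simpa using hzero)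
  have hres : ∀ i, residue O (g i) = 0 :=
    hO n (fun i => residue O (g i)) (by simp only [← map_pow, ← map_sum, hgsum, map_zero])
  have hgj : g j = (1 : O) := Subtype.coe_injective (by show f j / f j = ((1:O):K); rw [div_self hfj]; rfl)
  have hfinal := hres j
  rw [hgj, map_one] at hfinal
  exact one_ne_zero hfinal

lemma aux_hensel_quad {R : Type*} [CommRing R] [HenselianLocalRing R] (b c a₀ : R)
    (h1 : a₀ ^ 2 + b * a₀ + c ∈ maximalIdeal R)
    (h2 : IsUnit (2 * a₀ + b)) :
    ∃ a : R, a ^ 2 + b * a + c = 0 ∧ a - a₀ ∈ maximalIdeal R := by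
  have mon : (X ^ 2 + (C b * X + C c)).Monic := by
    apply Polynomial.monic_X_pow_add
    exact lt_of_le_of_lt (Polynomial.degree_linear_le) (by decide)
  have heval : ∀ t : R, (X ^ 2 + (C b * X + C c)).eval t = t ^ 2 + b * t + c := by
    intro t; simp [add_assoc]
  have hder : (X ^ 2 + (C b * X + C c)).derivative = C 2 * X + C b := by
    simp [Polynomial.derivative_X_pow]
    rw [← C_1, ← C_add, one_add_one_eq_two]
  obtain ⟨a, ha, ham⟩ := HenselianLocalRing.is_henselian (X ^ 2 + (C b * X + C c)) mon a₀
    (by rwa [heval]) (by rw [hder]; simpa using h2)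
  exact ⟨a, by rw [Polynomial.IsRoot, heval] at ha; exact ha, ham⟩

-- if the residue characteristic is 2 then -7 is a square, so there is a
-- nontrivial sum of squares equal to zero
lemma aux_sumsq_char2 {K : Type*} [Field K] (O : ValuationSubring K) [HenselianLocalRing O]
    (h2 : (2 : ResidueField O) = 0) :
    ∃ (n : ℕ) (f : Fin n → K) (i : Fin n), f i ≠ 0 ∧ (∑ t, f t ^ 2) = 0 := by
  have hmem : ((0 : O) ^ 2 + 1 * 0 + 2) ∈ maximalIdeal O := by
    rw [← residue_eq_zero_iff]
    have : ((0 : O) ^ 2 + 1 * 0 + 2) = 2 := by ring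
    rw [this, map_ofNat]
    exact h2
  have hunit : IsUnit (2 * (0 : O) + 1) := by
    rw [mul_zero, zero_add]; exact isUnit_one
  obtain ⟨r, hr, -⟩ := aux_hensel_quad (1 : O) 2 0 hmem hunit
  -- (2r+1)^2 + 7 = 4*(r^2 + r + 2) = 0
  set s : K := ((2 * r + 1 : O) : K) with hs
  have hsK : s ^ 2 + 7 = 0 := by
    have hO : ((2 * r + 1 : O)) ^ 2 + 7 = 0 := by
      have : ((2 * r + 1 : O)) ^ 2 + 7 = 4 * (r ^ 2 + 1 * r + 2) := by ring
      rw [this, hr, mul_zero]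
    have := congrArg (O.subtype) hO
    rw [map_add, map_pow, map_zero, map_ofNat] at this
    exact this
  refine ⟨8, ![s, 1, 1, 1, 1, 1, 1, 1], 1, one_ne_zero, ?_⟩
  have : (∑ t, (![s, 1, 1, 1, 1, 1, 1, 1]) t ^ 2) = s ^ 2 + 7 := by
    simp [Fin.sum_univ_succ]
    ring
  rw [this, hsK]

lemma aux_sumsq_algclosed {K : Type*} [Field K] (O : ValuationSubring K) [HenselianLocalRing O]
    (hk : IsAlgClosed (ResidueField O)) :
    ∃ (n : ℕ) (f : Fin n → K) (i : Fin n), f i ≠ 0 ∧ (∑ t, f t ^ 2) = 0 := by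
  by_cases h2 : (2 : ResidueField O) = 0
  · exact aux_sumsq_char2 O h2
  · obtain ⟨b, hb⟩ := IsAlgClosed.exists_pow_nat_eq (-1 : ResidueField O) (n := 2) (by norm_num)
    have hb0 : b ≠ 0 := by
      intro h; rw [h, zero_pow (two_ne_zero)] at hb; exact zero_ne_one (neg_eq_zero.mp hb.symm).symm
    obtain ⟨a₀, ha₀⟩ := residue_surjective (R := O) b
    have hmem : (a₀ ^ 2 + 0 * a₀ + 1) ∈ maximalIdeal O := by
      rw [← residue_eq_zero_iff]
      simp only [map_add, map_mul, map_pow, map_one, map_zero, zero_mul, add_zero, ha₀, hb]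
      ring
    have hunit : IsUnit (2 * a₀ + 0) := by
      rw [add_zero]
      apply notMem_maximalIdeal.mp
      intro hm
      have := (residue_eq_zero_iff _).mpr hm
      rw [map_mul, ha₀, map_ofNat] at this
      rcases mul_eq_zero.mp this with h | h
      · exact h2 h
      · exact hb0 h
    obtain ⟨a, ha, -⟩ := aux_hensel_quad (0 : O) 1 a₀ hmem hunit
    have haK : ((a : O) : K) ^ 2 + 1 = 0 := by
      have hO : (a : O) ^ 2 + 1 = 0 := by
        rw [← ha]; ring
      have := congrArg (O.subtype) hO
      rw [map_add, map_pow, map_one, map_zero] at this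
      exact this
    refine ⟨2, ![((a : O) : K), 1], 1, one_ne_zero, ?_⟩
    have : (∑ t, (![((a : O) : K), 1]) t ^ 2) = ((a : O) : K) ^ 2 + 1 := by
      simp [Fin.sum_univ_succ]
    rw [this, haK]

lemma aux_sumsq_finite {K : Type*} [Field K] (O : ValuationSubring K) [HenselianLocalRing O]
    [Finite (ResidueField O)] :
    ∃ (n : ℕ) (f : Fin n → K) (i : Fin n), f i ≠ 0 ∧ (∑ t, f t ^ 2) = 0 := by
  set k := ResidueField O
  by_cases h2 : (2 : k) = 0
  · exact aux_sumsq_char2 O h2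
  · -- finite residue field of odd characteristic: -1 = aa² + bb²
    haveI : CharP k (ringChar k) := ringChar.charP k
    haveI : NeZero (ringChar k) := ⟨CharP.char_ne_zero_of_finite k (ringChar k)⟩
    obtain ⟨aa, bb, hab⟩ := CharP.sq_add_sq k (ringChar k) (-1 : ℤ)
    rw [Int.cast_neg, Int.cast_one] at hab
    set x : O := (aa : O) with hxdef
    set y : O := (bb : O) with hydef
    have hx : residue O x = (aa : k) := map_natCast _ _
    have hy : residue O y = (bb : k) := map_natCast _ _
    set w : O := x ^ 2 + y ^ 2 with hw
    have hmem : ((1 : O) ^ 2 + 0 * 1 + w) ∈ maximalIdeal O := by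
      rw [← residue_eq_zero_iff]
      rw [show ((1 : O) ^ 2 + 0 * 1 + w) = 1 + (x ^ 2 + y ^ 2) by rw [hw]; ring]
      rw [map_add, map_add, map_pow, map_pow, map_one, hx, hy, hab]
      ring
    have hunit : IsUnit (2 * (1 : O) + 0) := by
      rw [add_zero, mul_one]
      apply notMem_maximalIdeal.mp
      intro hm
      have := (residue_eq_zero_iff _).mpr hm
      rw [map_ofNat] at this
      exact h2 this
    obtain ⟨c, hc, -⟩ := aux_hensel_quad (0 : O) w 1 hmem hunit
    have hcO : c ^ 2 + x ^ 2 + y ^ 2 = 0 := by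
      rw [← hc, hw]; ring
    have hcres : residue O c ≠ 0 := by
      intro h
      have h1 : residue O (c ^ 2 + x ^ 2 + y ^ 2) = 0 := by rw [hcO, map_zero]
      simp only [map_add, map_pow, h, hx, hy, hab] at h1
      rw [zero_pow two_ne_zero, zero_add] at h1
      -- h1 : aa ^ 2 + bb ^ 2 = 0, but aa² + bb² = -1
      rw [hab] at h1
      exact one_ne_zero (neg_eq_zero.mp h1)
    have hc0 : ((c : O) : K) ≠ 0 := by
      intro h
      apply hcres
      have : (c : O) = 0 := Subtype.coe_injective (by simpa using h)
      rw [this, map_zero]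
    have hKsum : ((c : O) : K) ^ 2 + ((x : O) : K) ^ 2 + ((y : O) : K) ^ 2 = 0 := by
      have := congrArg (O.subtype) hcO
      rw [map_add, map_add, map_pow, map_pow, map_pow, map_zero] at this
      exact this
    refine ⟨3, ![((c : O) : K), ((x : O) : K), ((y : O) : K)], 0, hc0, ?_⟩
    have : (∑ t, (![((c : O) : K), ((x : O) : K), ((y : O) : K)]) t ^ 2)
        = ((c : O) : K) ^ 2 + ((x : O) : K) ^ 2 + ((y : O) : K) ^ 2 := by
      simp [Fin.sum_univ_succ]
      ring
    rw [this, hKsum]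
/-- A field `k` is real closed: there is a linear order on `k` making it a
linearly ordered field in which every nonnegative element is a square and
every polynomial of odd degree has a root. -/
def IsRealClosedField (k : Type*) [Field k] : Prop :=
  ∃ le : k → k → Prop,
    IsLinearOrder k le ∧
    (∀ a b c : k, le a b → le (a + c) (b + c)) ∧
    (∀ a b : k, le 0 a → le 0 b → le 0 (a * b)) ∧
    (∀ a : k, le 0 a → ∃ b : k, b ^ 2 = a) ∧
    (∀ p : Polynomial k, Odd p.natDegree → ∃ x : k, p.eval x = 0)


-- sums of squares are anisotropic over a real closed field
lemma aux_rc_aniso {k : Type*} [Field k] (h : IsRealClosedField k) :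
    ∀ (n : ℕ) (a : Fin n → k), (∑ i, a i ^ 2) = 0 → ∀ i, a i = 0 := by
  obtain ⟨le, hlin, hadd, hmul, -, -⟩ := h
  have hrefl : ∀ x, le x x := hlin.toIsPartialOrder.toIsPreorder.toRefl.refl
  have htrans : ∀ {x y z}, le x y → le y z → le x z :=
    fun hxy hyz => hlin.toIsPartialOrder.toIsPreorder.toIsTrans.trans _ _ _ hxy hyz
  have hanti : ∀ {x y}, le x y → le y x → x = y :=
    fun hxy hyx => hlin.toIsPartialOrder.toAntisymm.antisymm _ _ hxy hyx
  have htot : ∀ x y, le x y ∨ le y x := hlin.toTotal.total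
  have hneg : ∀ x : k, le x 0 → le 0 (-x) := by
    intro x hx
    have := hadd x 0 (-x) hx
    rwa [add_neg_cancel, zero_add] at this
  have hsq : ∀ x : k, le 0 (x ^ 2) := by
    intro x
    rcases htot 0 x with hx | hx
    · rw [sq]; exact hmul x x hx hx
    · have := hmul (-x) (-x) (hneg x hx) (hneg x hx)
      rwa [neg_mul_neg, ← sq] at this
  have main : ∀ (n : ℕ) (a : Fin n → k),
      le 0 (∑ i, a i ^ 2) ∧ ((∑ i, a i ^ 2) = 0 → ∀ i, a i = 0) := by
    intro n
    induction n with
    | zero =>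
      intro a
      refine ⟨by simpa using hrefl 0, fun _ i => i.elim0⟩
    | succ m ih =>
      intro a
      have hrw : (∑ i, a i ^ 2) = a 0 ^ 2 + ∑ i : Fin m, a i.succ ^ 2 := Fin.sum_univ_succ _
      obtain ⟨ihle, ihzero⟩ := ih (fun i => a i.succ)
      have h1 : le 0 (a 0 ^ 2) := hsq (a 0)
      constructor
      · rw [hrw]
        have h2 := hadd 0 (∑ i : Fin m, a i.succ ^ 2) (a 0 ^ 2) ihle
        rw [zero_add] at h2
        rw [add_comm (∑ i : Fin m, a i.succ ^ 2) (a 0 ^ 2)] at h2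
        exact htrans h1 h2
      · intro hzero
        rw [hrw] at hzero
        have h2 := hadd 0 (a 0 ^ 2) (∑ i : Fin m, a i.succ ^ 2) h1
        rw [zero_add, hzero] at h2
        have hs0 : (∑ i : Fin m, a i.succ ^ 2) = 0 := hanti h2 ihle
        have ha0 : a 0 = 0 := by
          have : a 0 ^ 2 = 0 := by rw [hs0, add_zero] at hzero; exact hzero
          exact pow_eq_zero_iff (two_ne_zero) |>.mp this
        intro i
        rcases Fin.eq_zero_or_eq_succ i with rfl | ⟨j, rfl⟩
        · exact ha0
        · exact ihzero hs0 j
  exact fun n a h i => (main n a).2 h i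

/-- An infinite field is at most one of: ACVF-like, pCF-like, RCVF-like. -/
theorem trichotomy_mutually_exclusive
    (K : Type*) [Field K] [Infinite K] :
    ¬ ((∃ O : ValuationSubring K, HenselianLocalRing O ∧
          IsAlgClosed (IsLocalRing.ResidueField O)) ∧
       (∃ O : ValuationSubring K, HenselianLocalRing O ∧
          Finite (IsLocalRing.ResidueField O))) ∧
    ¬ ((∃ O : ValuationSubring K, HenselianLocalRing O ∧
          IsAlgClosed (IsLocalRing.ResidueField O)) ∧
       (∃ O : ValuationSubring K, HenselianLocalRing O ∧
          IsRealClosedField (IsLocalRing.ResidueField O))) ∧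
    ¬ ((∃ O : ValuationSubring K, HenselianLocalRing O ∧
          Finite (IsLocalRing.ResidueField O)) ∧
       (∃ O : ValuationSubring K, HenselianLocalRing O ∧
          IsRealClosedField (IsLocalRing.ResidueField O))) := by
  refine ⟨?_, ?_, ?_⟩
  · rintro ⟨⟨O1, h1, hac⟩, ⟨O2, h2, hfin⟩⟩
    haveI := h1; haveI := h2; haveI := hfin
    set k1 := ResidueField O1
    set k2 := ResidueField O2
    set N : ℕ := max (max (ringChar k1) (ringChar k2)) (Nat.card k2) with hN
    obtain ⟨ℓ, hle, hp⟩ := Nat.exists_infinite_primes (N + 1)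
    have hch1 : ringChar k1 ≠ ℓ := by
      have : ringChar k1 ≤ N := le_trans (le_max_left _ _) (le_max_left _ _)
      omega
    have hch2 : ringChar k2 ≠ ℓ := by
      have : ringChar k2 ≤ N := le_trans (le_max_right _ _) (le_max_left _ _)
      omega
    have cast1 : (ℓ : k1) ≠ 0 := aux_cast_prime_ne_zero _ ℓ hp hch1
    have cast2 : (ℓ : k2) ≠ 0 := aux_cast_prime_ne_zero _ ℓ hp hch2
    obtain ⟨S, hScard, hSroot⟩ := aux_many_roots O1 hac ℓ hp.ne_zero cast1
    have hbound : ℓ ≤ Nat.card k2 := by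
      rw [← hScard]; exact aux_finite_bound O2 ℓ cast2 S hSroot
    have : Nat.card k2 ≤ N := le_max_right _ _
    omega
  · rintro ⟨⟨O1, h1, hac⟩, ⟨O2, h2, hrc⟩⟩
    haveI := h1; haveI := h2
    obtain ⟨n, f, i, hfi, hsum⟩ := aux_sumsq_algclosed O1 hac
    exact hfi (aux_transfer O2 (aux_rc_aniso hrc) n f hsum i)
  · rintro ⟨⟨O1, h1, hfin⟩, ⟨O2, h2, hrc⟩⟩
    haveI := h1; haveI := h2; haveI := hfin
    obtain ⟨n, f, i, hfi, hsum⟩ := aux_sumsq_finite O1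
    exact hfi (aux_transfer O2 (aux_rc_aniso hrc) n f hsum i)
end

section
/- Let R be a commutative local ring and let I ⊆ J be ideals of R with J ≠ R. If the additive quotient group J/I is finite, then J is contained in the radical of I; that is, for every b ∈ J there exists n ≥ 1 with bⁿ ∈ I. -/
private lemma aux_pow_mem
    {R : Type*} [CommRing R] [IsLocalRing R] {I : Ideal R} {b : R}
    (hbnu : b ∈ nonunits R) {m n : ℕ} (hlt : m < n)
    (hdiff : b ^ (m + 1) - b ^ (n + 1) ∈ I) : b ^ (m + 1) ∈ I := by
  have hk : 1 ≤ n - m := by omega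
  have hu : IsUnit (1 - b ^ (n - m)) := by
    apply IsLocalRing.isUnit_one_sub_self_of_mem_nonunits
    have h : b ^ (n - m) = b ^ (n - m - 1) * b := by
      rw [← pow_succ, Nat.sub_add_cancel hk]
    rw [h]
    exact mul_mem_nonunits_right hbnu
  obtain ⟨u, hu⟩ := hu
  have key : b ^ (m + 1) * (1 - b ^ (n - m)) ∈ I := by
    have h : b ^ (m + 1) * (1 - b ^ (n - m)) = b ^ (m + 1) - b ^ (n + 1) := by
      rw [mul_sub, mul_one, ← pow_add]
      congr 2
      omega
    rw [h]; exact hdiff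
  have hmem : (↑u⁻¹ : R) * (b ^ (m + 1) * (1 - b ^ (n - m))) ∈ I :=
    I.mul_mem_left _ key
  have heq : (↑u⁻¹ : R) * (b ^ (m + 1) * (1 - b ^ (n - m))) = b ^ (m + 1) := by
    rw [← hu, mul_comm (b ^ (m + 1)), Units.inv_mul_cancel_left]
  rwa [heq] at hmem

/-- In a local ring, if `I ⊆ J` are ideals with `J` proper and the additive
quotient `J/I` finite, then `J` is contained in the radical of `I`. -/
theorem ideal_le_radical_of_finite_quotient
    (R : Type*) [CommRing R] [IsLocalRing R]
    (I J : Ideal R) (hIJ : I ≤ J) (hJ : J ≠ ⊤)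
    (hfin : Finite (J ⧸ (Submodule.comap J.subtype I))) :
    ∀ b ∈ J, ∃ n : ℕ, 1 ≤ n ∧ b ^ n ∈ I := by
  intro b hb
  have hbnu : b ∈ nonunits R := by
    intro hu
    exact hJ (J.eq_top_of_isUnit_mem hb hu)
  set Q := J ⧸ (Submodule.comap J.subtype I)
  have hpow : ∀ k : ℕ, b ^ (k + 1) ∈ J := fun k => by
    simpa [pow_succ] using J.mul_mem_left (b ^ k) hb
  let f : ℕ → Q := fun k => Submodule.Quotient.mk ⟨b ^ (k + 1), hpow k⟩
  have hninj : ¬ Function.Injective f := fun h =>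
    (Finite.of_injective f h).false.elim
  simp only [Function.Injective, not_forall] at hninj
  obtain ⟨m, n, hfeq, hne⟩ := hninj
  rcases lt_or_gt_of_ne hne with hlt | hlt
  · refine ⟨m + 1, Nat.le_add_left 1 m, ?_⟩
    have hdiff : b ^ (m + 1) - b ^ (n + 1) ∈ I := by
      have := (Submodule.Quotient.eq _).mp hfeq
      simpa using this
    exact aux_pow_mem hbnu hlt hdiff
  · refine ⟨n + 1, Nat.le_add_left 1 n, ?_⟩
    have hdiff : b ^ (n + 1) - b ^ (m + 1) ∈ I := by
      have := (Submodule.Quotient.eq _).mp hfeq.symm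
      simpa using this
    exact aux_pow_mem hbnu hlt hdiff
end

section
/- Let R be a commutative local ring and let 𝔭 ⊊ 𝔮 be prime ideals of R with the inclusion strict. Then the additive quotient group 𝔮/𝔭 is infinite. -/
/-- In a local ring, if `𝔭 ⊊ 𝔮` are prime ideals, then the additive quotient
group `𝔮/𝔭` is infinite. -/
theorem quotient_of_strict_primes_infinite
    (R : Type*) [CommRing R] [IsLocalRing R]
    (p q : Ideal R) (hp : p.IsPrime) (hq : q.IsPrime) (hpq : p < q) :
    Infinite (q ⧸ (Submodule.comap q.subtype p)) := by
  by_contra hinf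
  rw [not_infinite_iff_finite] at hinf
  obtain ⟨x, hxq, hxp⟩ := SetLike.exists_of_lt hpq
  have hmax : q ≤ IsLocalRing.maximalIdeal R := IsLocalRing.le_maximalIdeal hq.ne_top
  set f : ℕ → q ⧸ (Submodule.comap q.subtype p) :=
    fun n => Submodule.Quotient.mk ⟨x ^ (n + 1), q.pow_mem_of_mem hxq (n + 1) (Nat.succ_pos n)⟩
    with hf
  obtain ⟨m, n, hmn, heq⟩ := Finite.exists_ne_map_eq_of_infinite f
  wlog hlt : m < n generalizing m n
  · exact this n m hmn.symm heq.symm (by omega)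
  rw [hf, Submodule.Quotient.eq, Submodule.mem_comap] at heq
  have hdiff : x ^ (m + 1) - x ^ (n + 1) ∈ p := heq
  have hfac : x ^ (m + 1) - x ^ (n + 1) = x ^ (m + 1) * (1 - x ^ (n - m)) := by
    rw [mul_sub, mul_one, ← pow_add]
    congr 2
    omega
  have hu : IsUnit (1 - x ^ (n - m)) := by
    apply IsLocalRing.isUnit_one_sub_self_of_mem_nonunits
    exact (IsLocalRing.maximalIdeal R).pow_mem_of_mem (hmax hxq) (n - m) (by omega)
  rw [hfac] at hdiff
  rcases hp.mem_or_mem hdiff with h | h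
  · exact hxp (hp.mem_of_pow_mem _ h)
  · exact hp.ne_top (Ideal.eq_top_of_isUnit_mem p h hu)
end

section
/- Let K be a field equipped with a topology making it a topological ring. If the topology is compact and Hausdorff, then K is finite. -/
/-- A field carrying a compact Hausdorff topological ring topology is finite. -/
theorem finite_of_compact_t2_topological_field
    (K : Type*) [Field K] [TopologicalSpace K] [IsTopologicalRing K]
    [CompactSpace K] [T2Space K] :
    Finite K := by
  have hS : IsClosed {p : K × K | p.1 * p.2 = 1} :=
    isClosed_eq (continuous_fst.mul continuous_snd) continuous_const
  have hSc : IsCompact {p : K × K | p.1 * p.2 = 1} := hS.isCompact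
  have himg : IsCompact (Prod.fst '' {p : K × K | p.1 * p.2 = 1}) :=
    hSc.image continuous_fst
  have heq : Prod.fst '' {p : K × K | p.1 * p.2 = 1} = {(0 : K)}ᶜ := by
    ext x
    simp only [Set.mem_image, Set.mem_setOf_eq, Set.mem_compl_iff, Set.mem_singleton_iff]
    constructor
    · rintro ⟨p, hp, rfl⟩ h0
      rw [h0, zero_mul] at hp
      exact zero_ne_one hp
    · intro hx
      exact ⟨(x, x⁻¹), mul_inv_cancel₀ hx, rfl⟩
  have hopen : IsOpen ({(0 : K)} : Set K) := by
    rw [← isClosed_compl_iff, ← heq]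
    exact himg.isClosed
  have : DiscreteTopology K := by
    rw [discreteTopology_iff_isOpen_singleton_zero]
    exact hopen
  exact finite_of_compact_of_discrete
end

section
/- Let A be an infinite commutative topological ring whose topology is compact and Hausdorff, which is an integral domain, and such that for every nonzero a ∈ A the quotient ring A/aA is finite. Then every nonzero ideal I of A is both open and closed and has finite index (i.e. A/I is finite), while the zero ideal {0} is not open. -/
/-- A nonzero principal ideal is closed: it is the continuous image of a
compact space. -/
lemma span_singleton_isClosed_aux
    (A : Type*) [CommRing A]
    [TopologicalSpace A] [IsTopologicalRing A] [CompactSpace A] [T2Space A]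
    (a : A) : IsClosed ((Ideal.span {a} : Ideal A) : Set A) := by
  have h : ((Ideal.span {a} : Ideal A) : Set A) = Set.range (fun x : A => a * x) := by
    ext x
    simp only [SetLike.mem_coe, Ideal.mem_span_singleton, Set.mem_range]
    constructor
    · rintro ⟨c, rfl⟩; exact ⟨c, rfl⟩
    · rintro ⟨c, rfl⟩; exact ⟨c, rfl⟩
  rw [h]
  exact (isCompact_range (continuous_const.mul continuous_id)).isClosed

/-- In an infinite compact Hausdorff integral domain in which every nonzero
principal ideal has finite index, every nonzero ideal is clopen of finite
index, while the zero ideal is not open. -/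
theorem clopen_finite_index_ideals_of_compact_domain
    (A : Type*) [CommRing A] [IsDomain A] [Infinite A]
    [TopologicalSpace A] [IsTopologicalRing A] [CompactSpace A] [T2Space A]
    (hprin : ∀ a : A, a ≠ 0 → Finite (A ⧸ Ideal.span {a})) :
    (∀ I : Ideal A, I ≠ ⊥ →
      IsOpen (I : Set A) ∧ IsClosed (I : Set A) ∧ Finite (A ⧸ I)) ∧
    ¬ IsOpen ({0} : Set A) := by
  constructor
  · intro I hI
    obtain ⟨a, haI, ha⟩ := Submodule.exists_mem_ne_zero_of_ne_bot hI
    have hle : Ideal.span {a} ≤ I := by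
      rw [Ideal.span_le, Set.singleton_subset_iff]; exact haI
    have hfin : Finite (A ⧸ Ideal.span ({a} : Set A)) := hprin a ha
    -- the principal ideal is closed
    have hclosed : IsClosed ((Ideal.span {a} : Ideal A) : Set A) :=
      span_singleton_isClosed_aux A a
    -- finite index as additive subgroup
    have hfin' : Finite (A ⧸ (Ideal.span ({a} : Set A)).toAddSubgroup) := hfin
    have : (Ideal.span ({a} : Set A)).toAddSubgroup.FiniteIndex :=
      AddSubgroup.finiteIndex_of_finite_quotient
    have hopen : IsOpen ((Ideal.span {a} : Ideal A) : Set A) :=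
      AddSubgroup.isOpen_of_isClosed_of_finiteIndex
        (Ideal.span ({a} : Set A)).toAddSubgroup hclosed
    have hIopen : IsOpen (I : Set A) :=
      AddSubgroup.isOpen_mono (H₁ := (Ideal.span ({a} : Set A)).toAddSubgroup)
        (H₂ := I.toAddSubgroup) hle hopen
    refine ⟨hIopen, I.toAddSubgroup.isClosed_of_isOpen hIopen, ?_⟩
    refine Finite.of_surjective (Ideal.Quotient.factor hle) ?_
    intro x
    obtain ⟨y, rfl⟩ := Ideal.Quotient.mk_surjective x
    exact ⟨Ideal.Quotient.mk _ y, rfl⟩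
  · intro h
    haveI : DiscreteTopology A := discreteTopology_iff_isOpen_singleton_zero.mpr h
    haveI : Finite A := finite_of_compact_of_discrete
    exact not_finite A
end

section
/- Let A be an infinite commutative topological ring whose topology is compact and Hausdorff, which is an integral domain, and such that for every nonzero a ∈ A the quotient ring A/aA is finite. Then A is not a field, and A is a local ring (it has a unique maximal ideal). -/
/-- In a finite commutative monoid, some positive power of any element is idempotent. -/
lemma exists_pow_idem {M : Type*} [CommMonoid M] [Finite M] (x : M) :
    ∃ n : ℕ, 0 < n ∧ x ^ n * x ^ n = x ^ n := by
  obtain ⟨i, j, hij, hpow⟩ := Finite.exists_ne_map_eq_of_infinite (fun m : ℕ => x ^ (m + 1))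
  wlog hlt : i < j generalizing i j
  · exact this j i hij.symm hpow.symm (by omega)
  set p := i + 1 with hp
  set d := j - i with hd
  have hpd : j + 1 = p + d := by omega
  have hbase : x ^ p = x ^ p * x ^ d := by
    rw [← pow_add, ← hpd]; exact hpow
  have key : ∀ t s : ℕ, x ^ (p + s + t * d) = x ^ (p + s) := by
    intro t
    induction t with
    | zero => simp
    | succ t ih =>
      intro s
      have h1 : p + s + (t + 1) * d = p + (s + d) + t * d := by ring
      rw [h1, ih (s + d)]
      calc x ^ (p + (s + d)) = x ^ p * x ^ d * x ^ s := by rw [← pow_add, ← pow_add]; ring_nf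
      _ = x ^ p * x ^ s := by rw [← hbase]
      _ = x ^ (p + s) := by rw [← pow_add]
  have hd1 : 1 ≤ d := by omega
  refine ⟨p * d, by positivity, ?_⟩
  have hsplit : p * d = p + p * (d - 1) := by
    calc p * d = p * (d - 1 + 1) := by rw [Nat.sub_add_cancel hd1]
    _ = p + p * (d - 1) := by ring
  have hkey := key p (p * (d - 1))
  rw [← hsplit] at hkey
  rw [← pow_add]
  exact hkey

/-- A principal ideal in a compact topological ring is closed. -/
lemma span_singleton_isClosed {A : Type*} [CommRing A] [TopologicalSpace A]
    [IsTopologicalRing A] [CompactSpace A] [T2Space A] (c : A) :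
    IsClosed (Ideal.span {c} : Set A) := by
  have h : (Ideal.span {c} : Set A) = Set.range (fun y : A => c * y) := by
    ext x
    simp only [SetLike.mem_coe, Ideal.mem_span_singleton, Set.mem_range, dvd_def, eq_comm]
  rw [h]
  exact (isCompact_range (continuous_mul_left c)).isClosed

/-- An infinite compact Hausdorff integral domain in which every nonzero
principal ideal has finite index is not a field, and is a local ring. -/
theorem not_field_and_local_of_compact_domain
    (A : Type*) [CommRing A] [IsDomain A] [Infinite A]
    [TopologicalSpace A] [IsTopologicalRing A] [CompactSpace A] [T2Space A]
    (hprin : ∀ a : A, a ≠ 0 → Finite (A ⧸ Ideal.span {a})) :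
    ¬ IsField A ∧ IsLocalRing A := by
  -- the set of units is closed
  have hK : IsClosed {p : A × A | p.1 * p.2 = 1} :=
    isClosed_eq continuous_mul continuous_const
  have hU : IsClosed {x : A | IsUnit x} := by
    have himg : {x : A | IsUnit x} = Prod.fst '' {p : A × A | p.1 * p.2 = 1} := by
      ext x
      constructor
      · rintro hx
        obtain ⟨y, hy⟩ := isUnit_iff_exists_inv.mp hx
        exact ⟨(x, y), hy, rfl⟩
      · rintro ⟨⟨x', y⟩, hxy, rfl⟩
        exact isUnit_iff_exists_inv.mpr ⟨y, hxy⟩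
    rw [himg]
    exact (hK.isCompact.image continuous_fst).isClosed
  have hnotfield : ¬ IsField A := by
    intro hf
    have h0 : IsOpen ({(0 : A)} : Set A) := by
      have : ({(0 : A)} : Set A) = {x : A | IsUnit x}ᶜ := by
        ext x
        simp only [Set.mem_singleton_iff, Set.mem_compl_iff, Set.mem_setOf_eq]
        constructor
        · rintro rfl hu
          exact hu.ne_zero rfl
        · intro h
          by_contra hx
          obtain ⟨y, hy⟩ := hf.mul_inv_cancel hx
          exact h (isUnit_iff_exists_inv.mpr ⟨y, hy⟩)
      rw [this]
      exact hU.isOpen_compl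
    haveI : DiscreteTopology A := discreteTopology_iff_isOpen_singleton_zero.mpr h0
    haveI : Finite A := finite_of_compact_of_discrete
    exact not_finite A
  refine ⟨hnotfield, ?_⟩
  apply IsLocalRing.of_isUnit_or_isUnit_one_sub_self
  intro a
  by_contra hcon
  push_neg at hcon
  obtain ⟨ha, ha'⟩ := hcon
  have ha0 : a ≠ 0 := by rintro rfl; exact ha' (by simp)
  have ha1 : (1 : A) - a ≠ 0 := by
    intro h
    apply ha
    have : a = 1 := by linear_combination -h
    rw [this]; exact isUnit_one
  set c : A := a * (1 - a) with hc
  have hc0 : c ≠ 0 := mul_ne_zero ha0 ha1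
  set I : Ideal A := Ideal.span {c} with hI
  haveI : Finite (A ⧸ I) := hprin c hc0
  have hIclosed : IsClosed (I : Set A) := span_singleton_isClosed c
  set π : A →+* A ⧸ I := Ideal.Quotient.mk I with hπ
  obtain ⟨n, hn, hidem⟩ := exists_pow_idem (π a)
  set e : A ⧸ I := π a ^ n with he
  -- e ≠ 0
  have he0 : e ≠ 0 := by
    intro h
    have hmem : a ^ n ∈ I := by
      have : π (a ^ n) = 0 := by rw [map_pow]; exact h
      exact (Ideal.Quotient.eq_zero_iff_mem).mp this
    have hdvd : c ∣ a ^ n := Ideal.mem_span_singleton.mp hmem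
    have h1 : (1 - a) ∣ a ^ n := dvd_trans (Dvd.intro_left a rfl) hdvd
    have h2 : (1 - a) ∣ a ^ n - 1 := by
      have h := sub_dvd_pow_sub_pow a 1 n
      simp only [one_pow] at h
      rw [← neg_sub a 1, neg_dvd]
      exact h
    have : (1 - a) ∣ 1 := by
      have := dvd_sub h1 h2
      simpa using this
    exact ha' (isUnit_of_dvd_one this)
  -- e ≠ 1
  have he1 : e ≠ 1 := by
    intro h
    have hmem : a ^ n - 1 ∈ I := by
      rw [← Ideal.Quotient.mk_eq_mk_iff_sub_mem]
      rw [← hπ, map_pow, map_one]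
      exact h
    have hdvd : c ∣ a ^ n - 1 := Ideal.mem_span_singleton.mp hmem
    have h1 : a ∣ a ^ n - 1 := dvd_trans (Dvd.intro _ rfl) hdvd
    have h2 : a ∣ a ^ n := dvd_pow_self a hn.ne'
    have : a ∣ 1 := by
      have := dvd_sub h2 h1
      simpa using this
    exact ha (isUnit_of_dvd_one this)
  -- find an idempotent in the closure of powers of x := a ^ n
  set x : A := a ^ n with hx
  have hπx : π x = e := by rw [hx, map_pow]
  set R : Set A := Set.range (fun m : ℕ => x ^ (m + 1)) with hR
  have hRmul : ∀ u ∈ R, ∀ v ∈ R, u * v ∈ R := by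
    rintro u ⟨m, rfl⟩ v ⟨k, rfl⟩
    exact ⟨m + k + 1, by rw [← pow_add]; ring_nf⟩
  have hclosmul : ∀ u ∈ closure R, ∀ v ∈ closure R, u * v ∈ closure R := by
    intro u hu v hv
    exact map_mem_closure₂ continuous_mul hu hv hRmul
  obtain ⟨f, hfS, hff⟩ := exists_idempotent_in_compact_subsemigroup
    (fun r : A => continuous_mul_right r) (closure R)
    (Set.Nonempty.closure ⟨x, ⟨0, by simp⟩⟩)
    isClosed_closure.isCompact hclosmul
  -- every element of R is congruent to x mod I
  have heidem : ∀ m : ℕ, e ^ (m + 1) = e := by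
    intro m
    induction m with
    | zero => simp
    | succ m ih => rw [pow_succ, ih]; exact hidem
  have hRsub : R ⊆ {y : A | y - x ∈ I} := by
    rintro _ ⟨m, rfl⟩
    show x ^ (m + 1) - x ∈ I
    rw [← Ideal.Quotient.mk_eq_mk_iff_sub_mem, ← hπ, map_pow, hπx, heidem]
  have hclosedset : IsClosed {y : A | y - x ∈ I} := by
    have : {y : A | y - x ∈ I} = (fun y : A => y - x) ⁻¹' (I : Set A) := rfl
    rw [this]
    exact hIclosed.preimage (continuous_id.sub continuous_const)
  have hfmem : f - x ∈ I := (closure_minimal hRsub hclosedset) hfS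
  have hπf : π f = e := by
    rw [← hπx]
    exact (Ideal.Quotient.mk_eq_mk_iff_sub_mem f x).mpr hfmem
  -- f is idempotent in a domain, hence 0 or 1
  have : f = 0 ∨ f = 1 := by
    rcases mul_eq_zero.mp (show f * (f - 1) = 0 by ring_nf; linear_combination hff) with h | h
    · exact Or.inl h
    · exact Or.inr (by linear_combination h)
  rcases this with rfl | rfl
  · exact he0 (by rw [← hπf, map_zero])
  · exact he1 (by rw [← hπf, map_one])
end
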